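/- For all n ≥ 0, the following identity holds in ℚ(q)[x]: C_{n+1}(x|q) = Σ_{j=0}^{n} f(n+j, n-j | q^{-1}) · q^{jn + (n-j)(n+j+1)/2} · (x choose j)_q. -/

import Mathlib

open Polynomial Finset

/-- The indeterminate `q`, as an element of the field of rational functions `ℚ(q)`. -/
noncomputable def qq : RatFunc ℚ := RatFunc.X

/-- The Carlitz–Riordan `q`-ballot numbers `f(n,k|q) ∈ ℤ[q]`:
`f(0,0|q) = 1`, `f(n,k|q) = 0` for `k > n`, and
`f(n,k|q) = q·f(n,k-1|q) + q^k·f(n-1,k|q)` for `n ≥ k ≥ 0`, `(n,k) ≠ (0,0)`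
(with `f(n,-1|q) = 0`, so `f(n,0|q) = f(n-1,0|q)`). -/
noncomputable def fq : ℕ → ℕ → Polynomial ℤ
  | 0, 0 => 1
  | 0, _ + 1 => 0
  | n + 1, 0 => fq n 0
  | n + 1, k + 1 =>
    if k + 1 ≤ n + 1 then
      Polynomial.X * fq (n + 1) k + Polynomial.X ^ (k + 1) * fq n (k + 1)
    else 0
  termination_by n k => (n, k)

/-- The `q`-integer `[k]_q = (q^k - 1)/(q - 1)` in `ℚ(q)`. -/
noncomputable def qint (k : ℕ) : RatFunc ℚ := (qq ^ k - 1) / (qq - 1)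

/-- The `q`-binomial polynomial `(x choose j)_q = x(x-[1]_q)⋯(x-[j-1]_q)/([1]_q⋯[j]_q)`
in `ℚ(q)[x]`. -/
noncomputable def qbinom (j : ℕ) : Polynomial (RatFunc ℚ) :=
  Polynomial.C (∏ i ∈ Finset.range j, qint (i + 1))⁻¹ *
    ∏ i ∈ Finset.range j, (Polynomial.X - Polynomial.C (qint i))

lemma qq_ne_zero : qq ≠ 0 := RatFunc.X_ne_zero

lemma qq_pow_sub_one_ne_zero {d : ℕ} (hd : 1 ≤ d) : qq ^ d - 1 ≠ 0 := by
  intro h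
  have h2 : (algebraMap (Polynomial ℚ) (RatFunc ℚ)) (X ^ d - 1) = 0 := by
    rw [map_sub, map_pow, map_one]
    rw [show (algebraMap (Polynomial ℚ) (RatFunc ℚ)) X = qq from rfl]
    exact h
  have h3 : (X ^ d - 1 : Polynomial ℚ) = 0 :=
    (map_eq_zero_iff _ (RatFunc.algebraMap_injective ℚ)).mp h2
  have h4 := congrArg (Polynomial.coeff · 0) h3
  have hd0 : d ≠ 0 := by omega
  simp only [Polynomial.coeff_sub, Polynomial.coeff_X_pow, Polynomial.coeff_zero, Polynomial.coeff_one] at h4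
  rw [if_neg (by omega)] at h4
  norm_num at h4

lemma qq_pow_ne_one {d : ℕ} (hd : 1 ≤ d) : qq ^ d ≠ 1 := by
  intro h
  exact qq_pow_sub_one_ne_zero hd (by rw [h]; ring)

lemma qq_sub_one_ne_zero : qq - 1 ≠ 0 := by
  have := qq_pow_sub_one_ne_zero (d := 1) le_rfl
  simpa using this

lemma qint_zero : qint 0 = 0 := by simp [qint]

lemma qint_ne_zero (k : ℕ) : qint (k + 1) ≠ 0 := by
  simp only [qint, div_ne_zero_iff]
  exact ⟨qq_pow_sub_one_ne_zero (Nat.le_add_left 1 k), qq_sub_one_ne_zero⟩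

lemma qint_succ (k : ℕ) : qint (k + 1) = qq * qint k + 1 := by
  simp only [qint]
  field_simp [qq_sub_one_ne_zero]
  ring

lemma qint_add_inv (k : ℕ) : qint k + qq⁻¹ = qq⁻¹ * qint (k + 1) := by
  rw [qint_succ]
  field_simp [qq_ne_zero]

lemma one_sub_inv_pow (j : ℕ) : 1 - (qq ^ (j+1))⁻¹ = (qq ^ (j+1))⁻¹ * (qq - 1) * qint (j+1) := by
  simp only [qint]
  have h1 : qq ^ (j+1) ≠ 0 := pow_ne_zero _ qq_ne_zero
  field_simp [qq_sub_one_ne_zero]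

noncomputable def σp : Polynomial (RatFunc ℚ) := Polynomial.C qq⁻¹ * Polynomial.X - Polynomial.C qq⁻¹
noncomputable def τp : Polynomial (RatFunc ℚ) := Polynomial.C qq * Polynomial.X + 1

noncomputable def dd (j : ℕ) : RatFunc ℚ := ∏ i ∈ Finset.range j, qint (i + 1)
noncomputable def mm (j : ℕ) : Polynomial (RatFunc ℚ) :=
  ∏ i ∈ Finset.range j, (Polynomial.X - Polynomial.C (qint i))
noncomputable def mm' (j : ℕ) : Polynomial (RatFunc ℚ) :=
  ∏ i ∈ Finset.range j, (Polynomial.X - Polynomial.C (qint (i + 1)))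

lemma dd_ne_zero (j : ℕ) : dd j ≠ 0 := by
  exact Finset.prod_ne_zero_iff.mpr fun i _ => qint_ne_zero i

lemma qbinom_eq (j : ℕ) : qbinom j = Polynomial.C (dd j)⁻¹ * mm j := rfl

lemma qbinom_zero : qbinom 0 = 1 := by simp [qbinom]

-- factor comp lemmas
lemma factor_tau (i : ℕ) :
    (Polynomial.X - Polynomial.C (qint (i+1))).comp τp
      = Polynomial.C qq * (Polynomial.X - Polynomial.C (qint i)) := by
  simp only [τp, Polynomial.sub_comp, Polynomial.X_comp, Polynomial.C_comp, qint_succ]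
  rw [map_add, map_mul, map_one]
  ring

lemma factor_tau0 :
    (Polynomial.X - Polynomial.C (qint 0)).comp τp
      = Polynomial.C qq * (Polynomial.X + Polynomial.C qq⁻¹) := by
  simp only [τp, Polynomial.sub_comp, Polynomial.X_comp, Polynomial.C_comp, qint_zero]
  rw [mul_add, ← Polynomial.C_mul, mul_inv_cancel₀ qq_ne_zero]
  simp

lemma factor_sigma (i : ℕ) :
    (Polynomial.X - Polynomial.C (qint i)).comp σp
      = Polynomial.C qq⁻¹ * (Polynomial.X - Polynomial.C (qint (i+1))) := by
  simp only [σp, Polynomial.sub_comp, Polynomial.X_comp, Polynomial.C_comp]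
  rw [mul_sub, ← Polynomial.C_mul, ← qint_add_inv]
  rw [map_add]
  ring

lemma mm_comp_sigma (j : ℕ) : (mm j).comp σp = Polynomial.C (qq⁻¹ ^ j) * mm' j := by
  simp only [mm, mm', Polynomial.prod_comp]
  rw [Finset.prod_congr rfl (fun i _ => factor_sigma i), Finset.prod_mul_distrib,
    Finset.prod_const, ← Polynomial.C_pow, Finset.card_range]

lemma mm_succ (j : ℕ) : mm (j + 1) = mm j * (Polynomial.X - Polynomial.C (qint j)) :=
  Finset.prod_range_succ _ _

lemma mm'_succ (j : ℕ) : mm' (j + 1) = mm' j * (Polynomial.X - Polynomial.C (qint (j+1))) :=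
  Finset.prod_range_succ _ _

lemma mm_succ_eq_mm' (j : ℕ) : mm (j + 1) = mm' j * Polynomial.X := by
  rw [mm, Finset.prod_range_succ']
  simp [mm', qint_zero]

lemma dd_succ (j : ℕ) : dd (j + 1) = dd j * qint (j + 1) := Finset.prod_range_succ _ _

lemma mm_comp_tau (j : ℕ) : (mm (j+1)).comp τp
    = Polynomial.C (qq^(j+1)) * mm (j+1) + Polynomial.C (qq^j * qint (j+1)) * mm j := by
  have key : (Polynomial.X + Polynomial.C qq⁻¹ : Polynomial (RatFunc ℚ))
      = (Polynomial.X - Polynomial.C (qint j)) + Polynomial.C (qq⁻¹ * qint (j+1)) := by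
    have h := congrArg Polynomial.C (qint_add_inv j)
    rw [map_add] at h
    linear_combination h
  have hq : Polynomial.C qq * Polynomial.C (qq⁻¹ * qint (j+1))
      = (Polynomial.C (qint (j+1)) : Polynomial (RatFunc ℚ)) := by
    rw [← map_mul]
    congr 1
    field_simp [qq_ne_zero]
  have hC1 : (Polynomial.C (qq^(j+1)) : Polynomial (RatFunc ℚ))
      = Polynomial.C (qq^j) * Polynomial.C qq := by rw [← map_mul, pow_succ]
  have hC2 : (Polynomial.C (qq^j * qint (j+1)) : Polynomial (RatFunc ℚ))
      = Polynomial.C (qq^j) * Polynomial.C (qint (j+1)) := map_mul _ _ _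
  unfold mm
  rw [Polynomial.prod_comp, Finset.prod_range_succ']
  rw [Finset.prod_congr rfl (fun i _ => factor_tau i), factor_tau0,
    Finset.prod_mul_distrib, Finset.prod_const, Finset.card_range, ← Polynomial.C_pow]
  rw [Finset.prod_range_succ]
  set P : Polynomial (RatFunc ℚ) := ∏ i ∈ Finset.range j, (Polynomial.X - Polynomial.C (qint i)) with hP
  linear_combination (Polynomial.C (qq^j) * Polynomial.C qq * P) * key
    + (Polynomial.C (qq^j) * P) * hq
    - (P * (Polynomial.X - Polynomial.C (qint j))) * hC1 - P * hC2

lemma qbinom_comp_tau (j : ℕ) : (qbinom (j+1)).comp τp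
    = Polynomial.C (qq^(j+1)) * qbinom (j+1) + Polynomial.C (qq^j) * qbinom j := by
  rw [qbinom_eq, Polynomial.mul_comp, Polynomial.C_comp, mm_comp_tau]
  have hs : (dd (j+1))⁻¹ * (qq^j * qint (j+1)) = qq^j * (dd j)⁻¹ := by
    rw [dd_succ]
    field_simp [dd_ne_zero, qint_ne_zero]
  have hs' : Polynomial.C ((dd (j+1))⁻¹) * Polynomial.C (qq^j * qint (j+1))
      = Polynomial.C (qq^j) * (Polynomial.C ((dd j)⁻¹) : Polynomial (RatFunc ℚ)) := by
    rw [← map_mul, ← map_mul, hs]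
  linear_combination mm j * hs' - Polynomial.C (qq^j) * qbinom_eq j

lemma qbinom_comp_sigma (j : ℕ) :
    (qbinom j).comp σp = Polynomial.C ((dd j)⁻¹ * qq⁻¹^j) * mm' j := by
  rw [qbinom_eq, Polynomial.mul_comp, Polynomial.C_comp, mm_comp_sigma, map_mul]
  ring

lemma qbinom_sub_comp_sigma (j : ℕ) :
    qbinom (j+1) - (qbinom (j+1)).comp σp
      = Polynomial.C qq⁻¹ * (1 + Polynomial.C (qq - 1) * Polynomial.X) * ((qbinom j).comp σp) := by
  rw [qbinom_comp_sigma, qbinom_comp_sigma, mm'_succ, qbinom_eq, mm_succ_eq_mm']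
  set a := (dd (j+1))⁻¹ with ha
  set c := qint (j+1) with hc
  set d := (dd j)⁻¹ with hd
  have hane : dd (j+1) ≠ 0 := dd_ne_zero _
  have hdne : dd j ≠ 0 := dd_ne_zero _
  have hcne : c ≠ 0 := qint_ne_zero j
  have s1 : a - a * qq⁻¹^(j+1) = qq⁻¹ * (d * qq⁻¹^j) * (qq - 1) := by
    have h1 : a - a * qq⁻¹^(j+1) = a * (1 - (qq^(j+1))⁻¹) := by
      rw [← inv_pow]; ring
    rw [h1, one_sub_inv_pow, ha, dd_succ, ← hc, ← inv_pow]
    have hdd : d * dd j = 1 := inv_mul_cancel₀ hdne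
    rw [hd]
    linear_combination ((dd j)⁻¹ * qq⁻¹^(j+1) * (qq-1)) * inv_mul_cancel₀ hcne
  have s2 : a * qq⁻¹^(j+1) * c = qq⁻¹ * (d * qq⁻¹^j) := by
    rw [ha, dd_succ, ← hc]
    have hdd : d * dd j = 1 := inv_mul_cancel₀ hdne
    rw [hd]
    linear_combination ((dd j)⁻¹ * qq⁻¹^(j+1)) * inv_mul_cancel₀ hcne
  have hS1 : Polynomial.C a - Polynomial.C a * Polynomial.C (qq⁻¹^(j+1))
      = Polynomial.C qq⁻¹ * Polynomial.C (d * qq⁻¹^j) * (Polynomial.C (qq-1) : Polynomial (RatFunc ℚ)) := by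
    rw [← map_mul, ← map_sub, ← map_mul, ← map_mul, s1]
  have hS2 : Polynomial.C a * Polynomial.C (qq⁻¹^(j+1)) * Polynomial.C c
      = Polynomial.C qq⁻¹ * (Polynomial.C (d * qq⁻¹^j) : Polynomial (RatFunc ℚ)) := by
    rw [← map_mul, ← map_mul, ← map_mul, s2]
  have hCm : (Polynomial.C (a * qq⁻¹^(j+1)) : Polynomial (RatFunc ℚ))
      = Polynomial.C a * Polynomial.C (qq⁻¹^(j+1)) := map_mul _ _ _
  linear_combination (mm' j * Polynomial.X) * hS1 + mm' j * hS2
    - (mm' j * (Polynomial.X - Polynomial.C c)) * hCm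

lemma qbinom_eval (j : ℕ) : (qbinom j).eval (-qq⁻¹) = (-qq⁻¹)^j := by
  rw [qbinom_eq, Polynomial.eval_mul, Polynomial.eval_C, mm, Polynomial.eval_prod]
  have : ∀ i ∈ Finset.range j, (Polynomial.X - Polynomial.C (qint i)).eval (-qq⁻¹)
      = (-qq⁻¹) * qint (i+1) := by
    intro i _
    rw [Polynomial.eval_sub, Polynomial.eval_X, Polynomial.eval_C]
    have := qint_add_inv i
    linear_combination -this
  rw [Finset.prod_congr rfl this, Finset.prod_mul_distrib, Finset.prod_const, Finset.card_range]
  rw [show (∏ i ∈ Finset.range j, qint (i+1)) = dd j from rfl]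
  rw [← mul_assoc]
  rw [mul_comm ((dd j)⁻¹) ((-qq⁻¹)^j), mul_assoc, inv_mul_cancel₀ (dd_ne_zero j), mul_one]

noncomputable def gg (n k : ℕ) : RatFunc ℚ := Polynomial.aeval qq⁻¹ (fq n k)

lemma gg00 : gg 0 0 = 1 := by simp [gg, fq]
lemma gg_succ0 (n : ℕ) : gg (n+1) 0 = gg n 0 := by rw [gg, gg, fq]
lemma gg0 (n : ℕ) : gg n 0 = 1 := by
  induction n with
  | zero => exact gg00
  | succ m ih => rw [gg_succ0]; exact ih
lemma gg_zero {n k : ℕ} (h : n < k) : gg n k = 0 := by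
  obtain ⟨k, rfl⟩ : ∃ m, k = m + 1 := ⟨k - 1, by omega⟩
  cases n with
  | zero => rw [gg, fq]; simp
  | succ m =>
    rw [gg, fq, if_neg (by omega)]
    simp
lemma gg_rec {n k : ℕ} (h : k ≤ n) : gg (n+1) (k+1) = qq⁻¹ * gg (n+1) k + qq⁻¹^(k+1) * gg n (k+1) := by
  rw [gg, fq, if_pos (by omega)]
  rw [map_add, map_mul, map_mul, map_pow, Polynomial.aeval_X]
  rfl

def ee (n j : ℕ) : ℕ := j * n + (n - j) * (n + j + 1) / 2

lemma two_dvd_help (m t : ℕ) : 2 ∣ m * (m + 2 * t + 1) := by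
  rcases Nat.even_or_odd m with h | h
  · exact Dvd.dvd.mul_right h.two_dvd _
  · obtain ⟨s, hs⟩ := h
    exact Dvd.dvd.mul_left ⟨s + t + 1, by omega⟩ m

lemma two_ee (j k : ℕ) : 2 * ee (j + k) j = 2 * j * (j + k) + k * (k + 2 * j + 1) := by
  unfold ee
  rw [show j + k - j = k by omega, show j + k + j + 1 = k + 2 * j + 1 by omega]
  rw [Nat.mul_add, Nat.mul_div_cancel' (two_dvd_help k j)]
  ring

noncomputable def AA (n j : ℕ) : RatFunc ℚ :=
  if j ≤ n then gg (n + j) (n - j) * qq ^ (ee n j) else 0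

lemma AA_of_le {n j : ℕ} (h : j ≤ n) : AA n j = gg (n + j) (n - j) * qq ^ (ee n j) := if_pos h
lemma AA_of_gt {n j : ℕ} (h : n < j) : AA n j = 0 := if_neg (by omega)

lemma ee_eq_two {a b : ℕ} (h : 2 * a = 2 * b) : a = b := by omega

lemma gg_rec' {n k : ℕ} (h : k ≤ n) :
    qq^(k+1) * gg (n+1) (k+1) = qq^k * gg (n+1) k + gg n (k+1) := by
  have h1 : qq^(k+1) * (qq⁻¹ * gg (n+1) k) = qq^k * gg (n+1) k := by
    rw [pow_succ, mul_assoc, ← mul_assoc qq qq⁻¹, mul_inv_cancel₀ qq_ne_zero, one_mul]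
  have h2 : qq^(k+1) * (qq⁻¹^(k+1) * gg n (k+1)) = gg n (k+1) := by
    rw [inv_pow, ← mul_assoc, mul_inv_cancel₀ (pow_ne_zero _ qq_ne_zero), one_mul]
  rw [gg_rec h, mul_add, h1, h2]

lemma star (n j : ℕ) (h : j ≤ n) :
    AA (n+1) (j+1)
      = qq^(2*j+1) * AA n j + (qq^(2*j+1) + qq^(2*j+2)) * AA n (j+1)
        + qq^(2*j+2) * AA n (j+2) := by
  obtain ⟨k, rfl⟩ : ∃ k, n = j + k := ⟨n - j, by omega⟩
  match k with
  | 0 =>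
    rw [AA_of_le (by omega), AA_of_le (by omega), AA_of_gt (by omega), AA_of_gt (by omega)]
    rw [show j + 0 + 1 + (j + 1) = 2*j+2 by omega, show j + 0 + 1 - (j + 1) = 0 by omega,
      show j + 0 + j = 2*j by omega, show j + 0 - j = 0 by omega]
    rw [show gg (2*j+2) 0 = gg (2*j) 0 from by rw [gg_succ0, gg_succ0]]
    have hE : ee (j+0+1) (j+1) = ee (j+0) j + (2*j+1) := by
      apply ee_eq_two
      rw [Nat.mul_add, show j+0+1 = (j+1) + 0 by omega, two_ee, show j+0 = j+0 from rfl, two_ee]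
      ring
    rw [hE, pow_add]
    ring
  | 1 =>
    rw [AA_of_le (by omega), AA_of_le (by omega), AA_of_le (by omega), AA_of_gt (by omega)]
    rw [show j + 1 + 1 + (j + 1) = 2*j+3 by omega, show j + 1 + 1 - (j + 1) = 1 by omega,
      show j + 1 + j = 2*j+1 by omega, show j + 1 - j = 1 by omega,
      show j + 1 + (j+1) = 2*j+2 by omega, show j + 1 - (j+1) = 0 by omega]
    have e1 : qq^1 * gg (2*j+3) 1 = qq^0 * gg (2*j+3) 0 + gg (2*j+2) 1 := gg_rec' (by omega)
    have e2 : qq^1 * gg (2*j+2) 1 = qq^0 * gg (2*j+2) 0 + gg (2*j+1) 1 := gg_rec' (by omega)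
    have e3 : gg (2*j+3) 0 = gg (2*j+2) 0 := gg_succ0 _
    have hE1 : ee (j+1+1) (j+1) = ee (j+1) j + (2*j+3) := by
      apply ee_eq_two
      rw [Nat.mul_add, show j+1+1 = (j+1) + 1 by omega, two_ee, show j+1 = j+1 from rfl, two_ee]
      ring
    have hE2 : ee (j+1) (j+1) = ee (j+1) j := by
      apply ee_eq_two
      rw [show j+1 = (j+1) + 0 by omega]
      rw [two_ee]
      rw [show (j+1) + 0 = j + 1 by omega, two_ee]
      ring
    rw [hE1, hE2, pow_add]
    apply mul_left_cancel₀ (pow_ne_zero 2 qq_ne_zero)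
    linear_combination (qq ^ ee (j+1) j * qq^(2*j+3)) * (qq * e1 + e2 + qq * e3)
  | (k+2) =>
    rw [AA_of_le (by omega), AA_of_le (by omega), AA_of_le (by omega), AA_of_le (by omega)]
    rw [show j + (k+2) + 1 + (j + 1) = 2*j+k+4 by omega, show j + (k+2) + 1 - (j + 1) = k+2 by omega,
      show j + (k+2) + j = 2*j+k+2 by omega, show j + (k+2) - j = k+2 by omega,
      show j + (k+2) + (j+1) = 2*j+k+3 by omega, show j + (k+2) - (j+1) = k+1 by omega,
      show j + (k+2) + (j+2) = 2*j+k+4 by omega, show j + (k+2) - (j+2) = k by omega]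
    have e1 : qq^(k+2) * gg (2*j+k+4) (k+2) = qq^(k+1) * gg (2*j+k+4) (k+1) + gg (2*j+k+3) (k+2) :=
      gg_rec' (by omega)
    have e2 : qq^(k+1) * gg (2*j+k+4) (k+1) = qq^k * gg (2*j+k+4) k + gg (2*j+k+3) (k+1) :=
      gg_rec' (by omega)
    have e3 : qq^(k+2) * gg (2*j+k+3) (k+2) = qq^(k+1) * gg (2*j+k+3) (k+1) + gg (2*j+k+2) (k+2) :=
      gg_rec' (by omega)
    have hE1 : ee (j+(k+2)+1) (j+1) = ee (j+(k+2)) j + (2*j+2*k+5) := by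
      apply ee_eq_two
      rw [Nat.mul_add, show j+(k+2)+1 = (j+1) + (k+2) by omega, two_ee,
        show j+(k+2) = j + (k+2) from rfl, two_ee]
      ring
    have hE2 : ee (j+(k+2)) (j+1) = ee (j+(k+2)) j + (k+1) := by
      apply ee_eq_two
      rw [Nat.mul_add, show j+(k+2) = (j+1) + (k+1) by omega, two_ee,
        show (j+1)+(k+1) = j + (k+2) by omega, two_ee]
      ring
    have hE3 : ee (j+(k+2)) (j+2) = ee (j+(k+2)) j + (2*k+1) := by
      apply ee_eq_two
      rw [Nat.mul_add, show j+(k+2) = (j+2) + k by omega, two_ee,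
        show (j+2)+k = j + (k+2) by omega, two_ee]
      ring
    rw [hE1, hE2, hE3, pow_add, pow_add, pow_add]
    apply mul_left_cancel₀ (pow_ne_zero (2*k+4) qq_ne_zero)
    linear_combination (qq ^ ee (j+(k+2)) j * qq^(2*j+2*k+5)) *
      (qq^(k+2) * e1 + qq^(k+2) * e2 + e3)

lemma star0 (N : ℕ) : AA (N+1) 0 = AA N 0 + AA N 1 := by
  match N with
  | 0 =>
    have e : qq^(0+1) * gg (0+1) (0+1) = qq^0 * gg (0+1) 0 + gg 0 (0+1) := gg_rec' (le_refl 0)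
    rw [gg_succ0, gg00, show gg 0 (0+1) = 0 from gg_zero (by omega)] at e
    rw [AA_of_le (by omega), AA_of_le (by omega), AA_of_gt (by omega)]
    rw [show (1:ℕ)+0 = 1 from rfl, show (1:ℕ)-0 = 1 from rfl, show (0:ℕ)+0 = 0 from rfl,
      show (0:ℕ)-0 = 0 from rfl, show ee 1 0 = 1 from rfl, show ee 0 0 = 0 from rfl, gg00]
    simp only [pow_one, pow_zero] at e ⊢
    linear_combination e
  | (M+1) =>
    rw [AA_of_le (by omega), AA_of_le (by omega), AA_of_le (by omega)]
    rw [show M+1+1+0 = M+2 by omega, show M+1+1-0 = M+2 by omega,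
      show M+1+0 = M+1 by omega, show M+1-0 = M+1 by omega,
      show M+1+1 = M+2 by omega, show M+1-1 = M by omega]
    have e1 : qq^(M+2) * gg (M+2) (M+2) = qq^(M+1) * gg (M+2) (M+1) + gg (M+1) (M+2) :=
      gg_rec' (by omega)
    rw [show gg (M+1) (M+2) = 0 from gg_zero (by omega), add_zero] at e1
    have e2 : qq^(M+1) * gg (M+2) (M+1) = qq^M * gg (M+2) M + gg (M+1) (M+1) :=
      gg_rec' (by omega)
    have hA : ee (M+2) 0 = ee (M+1) 0 + (M+2) := by
      apply ee_eq_two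
      rw [Nat.mul_add, show M+2 = 0 + (M+2) by omega, two_ee, show M+1 = 0 + (M+1) by omega, two_ee]
      ring
    have hC : ee (M+1) 1 = ee (M+1) 0 + M := by
      apply ee_eq_two
      rw [Nat.mul_add, show M+1 = 1 + M by omega, two_ee, show 1 + M = 0 + (M+1) by omega, two_ee]
      ring
    rw [hA, hC, pow_add, pow_add]
    linear_combination (qq ^ ee (M+1) 0) * (e1 + e2)

lemma tau_comp_sigma : τp.comp σp = Polynomial.X := by
  unfold τp σp
  rw [Polynomial.add_comp, Polynomial.mul_comp, Polynomial.C_comp, Polynomial.X_comp,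
    Polynomial.one_comp, mul_sub, ← Polynomial.C_mul, mul_inv_cancel₀ qq_ne_zero]
  rw [← mul_assoc, ← Polynomial.C_mul, mul_inv_cancel₀ qq_ne_zero]
  simp

lemma sum_shift (N : ℕ) (c : ℕ → RatFunc ℚ) (hc : c (N+1) = 0) :
    ∑ j ∈ Finset.range (N+1), Polynomial.C (c j) * (qbinom j).comp τp
      = ∑ j ∈ Finset.range (N+1), Polynomial.C (qq^j * (c j + c (j+1))) * qbinom j := by
  have hb0 : (qbinom 0).comp τp = 1 := by rw [qbinom_zero, Polynomial.one_comp]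
  rw [Finset.sum_range_succ' (fun j => Polynomial.C (c j) * (qbinom j).comp τp) N]
  have h1 : ∀ j ∈ Finset.range N, Polynomial.C (c (j+1)) * (qbinom (j+1)).comp τp
      = Polynomial.C (qq^(j+1) * c (j+1)) * qbinom (j+1)
        + Polynomial.C (qq^j * c (j+1)) * qbinom j := by
    intro j _
    rw [qbinom_comp_tau, map_mul, map_mul]
    ring
  rw [Finset.sum_congr rfl h1, Finset.sum_add_distrib]
  have h2 : ∀ j ∈ Finset.range (N+1), Polynomial.C (qq^j * (c j + c (j+1))) * qbinom j
      = Polynomial.C (qq^j * c j) * qbinom j + Polynomial.C (qq^j * c (j+1)) * qbinom j := by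
    intro j _
    rw [mul_add, map_add]
    ring
  rw [Finset.sum_congr rfl h2, Finset.sum_add_distrib]
  rw [Finset.sum_range_succ' (fun j => Polynomial.C (qq^j * c j) * qbinom j) N,
    Finset.sum_range_succ (fun j => Polynomial.C (qq^j * c (j+1)) * qbinom j) N,
    hb0, hc, qbinom_zero]
  simp only [pow_zero, one_mul, mul_zero, map_zero, zero_mul, mul_one, add_zero]
  abel

noncomputable def GG (n : ℕ) : Polynomial (RatFunc ℚ) :=
  ∑ j ∈ Finset.range (n+1), Polynomial.C (AA n j) * qbinom j

lemma GG_FE (n : ℕ) :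
    GG (n+1) - (GG (n+1)).comp σp
      = (1 + Polynomial.C (qq - 1) * Polynomial.X) * ((GG n).comp τp) := by
  have hDD1 : AA n (n+1) = 0 := AA_of_gt (by omega)
  have hDD2 : AA n (n+2) = 0 := AA_of_gt (by omega)
  set DD : ℕ → RatFunc ℚ := fun j => qq^j * (AA n j + AA n (j+1)) with hDD
  -- step 1 : key sum identity
  have hstep1 : ∑ j ∈ Finset.range (n+1), Polynomial.C (AA n j) * (qbinom j).comp τp
      = ∑ j ∈ Finset.range (n+1), Polynomial.C (DD j) * qbinom j :=
    sum_shift n (fun j => AA n j) hDD1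
  have hstep2 : ∑ j ∈ Finset.range (n+1), Polynomial.C (DD j) * (qbinom j).comp τp
      = ∑ j ∈ Finset.range (n+1), Polynomial.C (qq^j * (DD j + DD (j+1))) * qbinom j :=
    sum_shift n DD (by rw [hDD]; simp only [hDD1, hDD2]; ring)
  -- coefficient identity
  have hcoef : ∀ j ∈ Finset.range (n+1),
      Polynomial.C (qq⁻¹ * AA (n+1) (j+1)) * qbinom j
        = Polynomial.C (qq^j * (DD j + DD (j+1))) * qbinom j := by
    intro j hj
    have hjle : j ≤ n := by simpa using Nat.lt_succ_iff.mp (Finset.mem_range.mp hj)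
    congr 2
    rw [inv_mul_eq_iff_eq_mul₀ qq_ne_zero, star n j hjle]
    simp only [hDD]
    ring
  -- key chain
  have hK : ∑ j ∈ Finset.range (n+1), Polynomial.C (qq⁻¹ * AA (n+1) (j+1)) * qbinom j
      = ((∑ j ∈ Finset.range (n+1), Polynomial.C (AA n j) * (qbinom j).comp τp)).comp τp := by
    rw [hstep1, Polynomial.sum_comp]
    have : ∀ j ∈ Finset.range (n+1), (Polynomial.C (DD j) * qbinom j).comp τp
        = Polynomial.C (DD j) * (qbinom j).comp τp := by
      intro j _
      rw [Polynomial.mul_comp, Polynomial.C_comp]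
    rw [Finset.sum_congr rfl this, hstep2, Finset.sum_congr rfl hcoef]
  -- compose with σp
  have hs : ∑ j ∈ Finset.range (n+1), Polynomial.C (qq⁻¹ * AA (n+1) (j+1)) * (qbinom j).comp σp
      = ∑ j ∈ Finset.range (n+1), Polynomial.C (AA n j) * (qbinom j).comp τp := by
    have := congrArg (fun P => P.comp σp) hK
    simp only [Polynomial.sum_comp, Polynomial.mul_comp, Polynomial.C_comp] at this
    rw [this]
    apply Finset.sum_congr rfl
    intro j _
    rw [Polynomial.comp_assoc, tau_comp_sigma, Polynomial.comp_X]
  -- expand LHS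
  have hL : GG (n+1) - (GG (n+1)).comp σp
      = (1 + Polynomial.C (qq - 1) * Polynomial.X)
        * ∑ j ∈ Finset.range (n+1),
            Polynomial.C (qq⁻¹ * AA (n+1) (j+1)) * (qbinom j).comp σp := by
    rw [GG, Polynomial.sum_comp]
    have hterm : ∀ j ∈ Finset.range (n+2), (Polynomial.C (AA (n+1) j) * qbinom j).comp σp
        = Polynomial.C (AA (n+1) j) * (qbinom j).comp σp := by
      intro j _
      rw [Polynomial.mul_comp, Polynomial.C_comp]
    rw [Finset.sum_congr rfl hterm, ← Finset.sum_sub_distrib]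
    rw [Finset.sum_range_succ'
      (fun j => Polynomial.C (AA (n+1) j) * qbinom j - Polynomial.C (AA (n+1) j) * (qbinom j).comp σp) (n+1)]
    have hterm1 : ∀ j ∈ Finset.range (n+1),
        Polynomial.C (AA (n+1) (j+1)) * qbinom (j+1)
            - Polynomial.C (AA (n+1) (j+1)) * (qbinom (j+1)).comp σp
          = (1 + Polynomial.C (qq-1) * Polynomial.X)
            * (Polynomial.C (qq⁻¹ * AA (n+1) (j+1)) * (qbinom j).comp σp) := by
      intro j _
      rw [← mul_sub, qbinom_sub_comp_sigma, map_mul]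
      ring
    rw [Finset.sum_congr rfl hterm1, qbinom_zero, Polynomial.one_comp, ← Finset.mul_sum]
    simp
  rw [hL, hs]
  rw [GG, Polynomial.sum_comp]
  have hterm2 : ∀ j ∈ Finset.range (n+1), (Polynomial.C (AA n j) * qbinom j).comp τp
      = Polynomial.C (AA n j) * (qbinom j).comp τp := by
    intro j _
    rw [Polynomial.mul_comp, Polynomial.C_comp]
  rw [Finset.sum_congr rfl hterm2]

lemma GG_eval (M : ℕ) : (GG (M+1)).eval (-qq⁻¹) = 0 := by
  set y : RatFunc ℚ := -qq⁻¹ with hy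
  have h1 : qq * y = -1 := by rw [hy]; field_simp [qq_ne_zero]
  have h2 : qq * qq⁻¹ = 1 := mul_inv_cancel₀ qq_ne_zero
  rw [GG, Polynomial.eval_finset_sum]
  have hev : ∀ j ∈ Finset.range (M+2), (Polynomial.C (AA (M+1) j) * qbinom j).eval y
      = AA (M+1) j * y^j := by
    intro j _
    rw [Polynomial.eval_mul, Polynomial.eval_C, hy, qbinom_eval]
  rw [Finset.sum_congr rfl hev]
  set tt : ℕ → RatFunc ℚ := fun i => y^i * qq^(2*i) * AA M i with htt
  set uu : ℕ → RatFunc ℚ := fun i => qq⁻¹ * tt i with huu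
  rw [Finset.sum_range_succ' (fun j => AA (M+1) j * y^j) (M+1)]
  have hterm : ∀ j ∈ Finset.range (M+1), AA (M+1) (j+1) * y^(j+1)
      = (tt (j+1) - tt j) + (uu (j+1) - uu (j+2)) := by
    intro j hj
    have hjle : j ≤ M := Nat.lt_succ_iff.mp (Finset.mem_range.mp hj)
    rw [star M j hjle]
    simp only [htt, huu]
    linear_combination (y^j * qq^(2*j) * AA M j + qq^(2*j+2) * y^(j+1) * AA M (j+2)) * h1
      + (qq^(2*j+3) * y^(j+2) * AA M (j+2) - y^(j+1) * qq^(2*j+1) * AA M (j+1)) * h2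
  rw [Finset.sum_congr rfl hterm, Finset.sum_add_distrib, Finset.sum_range_sub tt,
    Finset.sum_range_sub' (fun i => uu (i+1))]
  have hz1 : AA M (M+1) = 0 := AA_of_gt (by omega)
  have hz2 : AA M (M+2) = 0 := AA_of_gt (by omega)
  have hst := star0 M
  simp only [htt, huu, hz1, hz2, pow_zero, mul_zero, zero_mul, one_mul, mul_one]
  linear_combination hst + (AA M 1 * qq * y) * h2 + (AA M 1) * h1

lemma const_of_comp (P : Polynomial (RatFunc ℚ)) (h : P.comp σp = P) :
    ∃ c, P = Polynomial.C c := by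
  by_cases h0 : P.natDegree = 0
  · exact ⟨P.coeff 0, Polynomial.eq_C_of_natDegree_eq_zero h0⟩
  · exfalso
    have hinv : qq⁻¹ ≠ 0 := inv_ne_zero qq_ne_zero
    have hσ : σp = Polynomial.C qq⁻¹ * Polynomial.X + Polynomial.C (-qq⁻¹) := by
      rw [σp, map_neg]; ring
    have hσdeg : σp.natDegree = 1 := by
      rw [hσ]; exact Polynomial.natDegree_linear hinv
    have hσlc : σp.leadingCoeff = qq⁻¹ := by
      rw [hσ]; exact Polynomial.leadingCoeff_linear hinv
    have hlc := Polynomial.leadingCoeff_comp (p := P) (q := σp) (by rw [hσdeg]; omega)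
    rw [h, hσlc] at hlc
    have hPne : P ≠ 0 := fun hP => h0 (by simp [hP])
    have hlc0 : P.leadingCoeff ≠ 0 := Polynomial.leadingCoeff_ne_zero.mpr hPne
    have h1 : qq⁻¹ ^ P.natDegree = 1 := by
      have := mul_left_cancel₀ hlc0
        (by rw [← hlc, mul_one] : P.leadingCoeff * 1 = P.leadingCoeff * qq⁻¹ ^ P.natDegree)
      exact this.symm
    have h2 : qq ^ P.natDegree = 1 := by
      rw [inv_pow] at h1
      rw [← inv_inv (qq ^ P.natDegree), h1, inv_one]
    exact qq_pow_ne_one (by omega) h2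

/-- For all `n ≥ 0`:
`C_{n+1}(x|q) = Σ_{j=0}^{n} f(n+j, n-j|q⁻¹) q^{jn + (n-j)(n+j+1)/2} (x choose j)_q`. -/
theorem statement10 (Cs : ℕ → Polynomial (RatFunc ℚ))
    (h1 : Cs 1 = 1)
    (h2 : ∀ n, 2 ≤ n → (Cs n).eval (-qq⁻¹) = 0)
    (h3 : ∀ n, 1 ≤ n →
      Cs (n + 1) -
          (Cs (n + 1)).comp (Polynomial.C qq⁻¹ * Polynomial.X - Polynomial.C qq⁻¹) =
        (1 + Polynomial.C (qq - 1) * Polynomial.X) *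
          (Cs n).comp (Polynomial.C qq * Polynomial.X + 1))
    (n : ℕ) :
    Cs (n + 1) =
      ∑ j ∈ Finset.range (n + 1),
        Polynomial.C (Polynomial.aeval qq⁻¹ (fq (n + j) (n - j)) *
          qq ^ (j * n + (n - j) * (n + j + 1) / 2)) * qbinom j := by
  induction n with
  | zero =>
    rw [h1, Finset.sum_range_one]
    simp [fq, qbinom_zero]
  | succ m ih =>
    have hsum : ∀ N : ℕ, (∑ j ∈ Finset.range (N + 1),
        Polynomial.C (Polynomial.aeval qq⁻¹ (fq (N + j) (N - j)) *
          qq ^ (j * N + (N - j) * (N + j + 1) / 2)) * qbinom j) = GG N := by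
      intro N
      rw [GG]
      apply Finset.sum_congr rfl
      intro j hj
      rw [AA_of_le (Nat.lt_succ_iff.mp (Finset.mem_range.mp hj))]
      rfl
    rw [hsum (m+1)]
    rw [hsum m] at ih
    have hFE := h3 (m+1) (by omega)
    rw [ih] at hFE
    rw [show (Polynomial.C qq⁻¹ * Polynomial.X - Polynomial.C qq⁻¹ : Polynomial (RatFunc ℚ)) = σp
      from rfl] at hFE
    rw [show (Polynomial.C qq * Polynomial.X + 1 : Polynomial (RatFunc ℚ)) = τp from rfl] at hFE
    have hGFE := GG_FE m
    have hDcomp : (Cs (m+1+1) - GG (m+1)).comp σp = Cs (m+1+1) - GG (m+1) := by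
      rw [Polynomial.sub_comp]
      linear_combination hGFE - hFE
    obtain ⟨c, hc⟩ := const_of_comp _ hDcomp
    have hev1 : (Cs (m+1+1)).eval (-qq⁻¹) = 0 := h2 (m+1+1) (by omega)
    have hev2 : (GG (m+1)).eval (-qq⁻¹) = 0 := GG_eval m
    have hc0 : c = 0 := by
      have hmm := congrArg (Polynomial.eval (-qq⁻¹)) hc
      rw [Polynomial.eval_sub, hev1, hev2, Polynomial.eval_C] at hmm
      simpa using hmm.symm
    have hfin : Cs (m+1+1) - GG (m+1) = 0 := by rw [hc, hc0, map_zero]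
    exact sub_eq_zero.mp hfin
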